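/- arXiv:2109.06193 — 7 statements merged into one kernel-verified Lean document; each statement's English description precedes it below -/
import Mathlib

section
/- Let U ⊆ ℝ² be an open set contained in {(σ,η) : σ ≠ 0} and let V̂ : ℝ² → ℝ be twice continuously differentiable on U with ∂²V̂/∂σ² + ∂²V̂/∂η² = 0 on U. Then the function V(σ,η) = V̂(σ,η)/σ satisfies the master equation ∂/∂σ (σ² ∂V/∂σ) + σ² ∂²V/∂η² = 0 at every point of U. -/
open Filter

/-- Partial derivative with respect to the first variable σ. -/
noncomputable def pderivFst (f : ℝ × ℝ → ℝ) : ℝ × ℝ → ℝ :=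
  fun p => deriv (fun s => f (s, p.2)) p.1

/-- Partial derivative with respect to the second variable η. -/
noncomputable def pderivSnd (f : ℝ × ℝ → ℝ) : ℝ × ℝ → ℝ :=
  fun p => deriv (fun t => f (p.1, t)) p.2

lemma partialFst {E : Type*} [NormedAddCommGroup E] [NormedSpace ℝ E]
    {f : ℝ × ℝ → E} {a b : ℝ} (h : DifferentiableAt ℝ f (a, b)) :
    HasDerivAt (fun s => f (s, b)) (fderiv ℝ f (a, b) (1, 0)) a := by
  have hline : HasDerivAt (fun s : ℝ => (s, b)) ((1 : ℝ), (0 : ℝ)) a :=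
    (hasDerivAt_id a).prodMk (hasDerivAt_const a b)
  exact h.hasFDerivAt.comp_hasDerivAt a hline

lemma partialSnd {E : Type*} [NormedAddCommGroup E] [NormedSpace ℝ E]
    {f : ℝ × ℝ → E} {a b : ℝ} (h : DifferentiableAt ℝ f (a, b)) :
    HasDerivAt (fun t => f (a, t)) (fderiv ℝ f (a, b) (0, 1)) b := by
  have hline : HasDerivAt (fun t : ℝ => (a, t)) ((0 : ℝ), (1 : ℝ)) b :=
    (hasDerivAt_const b a).prodMk (hasDerivAt_id b)
  exact h.hasFDerivAt.comp_hasDerivAt b hline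

/-- If `V̂` is harmonic and C² on an open set `U` avoiding `σ = 0`, then
`V = V̂/σ` satisfies the master equation `∂_σ(σ² ∂_σ V) + σ² ∂²_η V = 0` on `U`. -/
theorem stmt0 (U : Set (ℝ × ℝ)) (hU : IsOpen U) (hU0 : ∀ p ∈ U, p.1 ≠ 0)
    (Vhat : ℝ × ℝ → ℝ) (hC2 : ContDiffOn ℝ 2 Vhat U)
    (hharm : ∀ p ∈ U, pderivFst (pderivFst Vhat) p + pderivSnd (pderivSnd Vhat) p = 0) :
    ∀ p ∈ U,
      pderivFst (fun q => q.1 ^ 2 * pderivFst (fun r => Vhat r / r.1) q) p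
        + p.1 ^ 2 * pderivSnd (pderivSnd (fun r => Vhat r / r.1)) p = 0 := by
  -- differentiability facts
  have hVd : ∀ q ∈ U, DifferentiableAt ℝ Vhat q := fun q hq =>
    ((hC2.contDiffAt (hU.mem_nhds hq)).differentiableAt two_ne_zero)
  set A := fderiv ℝ Vhat with hA
  -- first partials equal fderiv applied to basis vectors, on U
  have hFA : ∀ q ∈ U, pderivFst Vhat q = A q (1, 0) := by
    intro q hq
    obtain ⟨x, y⟩ := q
    exact (partialFst (hVd _ hq)).deriv
  have hGA : ∀ q ∈ U, pderivSnd Vhat q = A q (0, 1) := by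
    intro q hq
    obtain ⟨x, y⟩ := q
    exact (partialSnd (hVd _ hq)).deriv
  -- formula for pderivFst of W := Vhat / σ on U
  have hW1 : ∀ q ∈ U, pderivFst (fun r => Vhat r / r.1) q
      = (A q (1, 0) * q.1 - Vhat q) / q.1 ^ 2 := by
    intro q hq
    obtain ⟨x, y⟩ := q
    have hx : x ≠ 0 := hU0 _ hq
    have hd : HasDerivAt (fun s => Vhat (s, y) / s)
        ((A (x, y) (1, 0) * x - Vhat (x, y) * 1) / x ^ 2) x :=
      (partialFst (hVd _ hq)).div (hasDerivAt_id x) hx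
    simpa [pderivFst] using hd.deriv
  -- formula for pderivSnd of W on U
  have hW2 : ∀ q ∈ U, pderivSnd (fun r => Vhat r / r.1) q = A q (0, 1) / q.1 := by
    intro q hq
    obtain ⟨x, y⟩ := q
    exact ((partialSnd (hVd _ hq)).div_const x).deriv
  intro p hp
  obtain ⟨a, b⟩ := p
  have ha : a ≠ 0 := hU0 _ hp
  -- second derivative data at (a,b)
  have hAc : ContDiffAt ℝ 1 A (a, b) :=
    (hC2.contDiffAt (hU.mem_nhds hp)).fderiv_right (by norm_num)
  have hA' : DifferentiableAt ℝ A (a, b) := hAc.differentiableAt one_ne_zero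
  set A2 := fderiv ℝ A (a, b) with hA2
  have hF1 : HasDerivAt (fun s => A (s, b) (1, 0)) (A2 (1, 0) (1, 0)) a := by
    simpa using (partialFst hA').clm_apply (hasDerivAt_const a ((1 : ℝ), (0 : ℝ)))
  have hG2 : HasDerivAt (fun t => A (a, t) (0, 1)) (A2 (0, 1) (0, 1)) b := by
    simpa using (partialSnd hA').clm_apply (hasDerivAt_const b ((0 : ℝ), (1 : ℝ)))
  -- neighborhood facts
  have hUb1 : ∀ᶠ s in nhds a, (s, b) ∈ U := by
    have hc : ContinuousAt (fun s : ℝ => (s, b)) a := by fun_prop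
    exact hc.preimage_mem_nhds (hU.mem_nhds hp)
  have hUb2 : ∀ᶠ t in nhds b, (a, t) ∈ U := by
    have hc : ContinuousAt (fun t : ℝ => (a, t)) b := by fun_prop
    exact hc.preimage_mem_nhds (hU.mem_nhds hp)
  have hne : ∀ᶠ s in nhds a, s ≠ 0 := isOpen_ne.eventually_mem ha
  -- harmonicity rewritten
  have h11 : pderivFst (pderivFst Vhat) (a, b) = A2 (1, 0) (1, 0) := by
    have heq : (fun s => pderivFst Vhat (s, b)) =ᶠ[nhds a] fun s => A (s, b) (1, 0) :=
      hUb1.mono fun s hs => hFA _ hs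
    have := heq.deriv_eq
    rw [pderivFst] at *
    rw [this, hF1.deriv]
  have h22 : pderivSnd (pderivSnd Vhat) (a, b) = A2 (0, 1) (0, 1) := by
    have heq : (fun t => pderivSnd Vhat (a, t)) =ᶠ[nhds b] fun t => A (a, t) (0, 1) :=
      hUb2.mono fun t ht => hGA _ ht
    have := heq.deriv_eq
    rw [pderivSnd] at *
    rw [this, hG2.deriv]
  have hharm' : A2 (1, 0) (1, 0) + A2 (0, 1) (0, 1) = 0 := by
    have := hharm _ hp; rw [h11, h22] at this; exact this
  -- first term of the goal
  have hT1 : pderivFst (fun q => q.1 ^ 2 * pderivFst (fun r => Vhat r / r.1) q) (a, b)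
      = a * A2 (1, 0) (1, 0) := by
    have heq : (fun s => (s : ℝ) ^ 2 * pderivFst (fun r => Vhat r / r.1) (s, b))
        =ᶠ[nhds a] fun s => s * A (s, b) (1, 0) - Vhat (s, b) := by
      filter_upwards [hUb1, hne] with s hs hs0
      rw [hW1 _ hs]
      field_simp
    have hg : HasDerivAt (fun s => s * A (s, b) (1, 0) - Vhat (s, b))
        (1 * A (a, b) (1, 0) + a * (A2 (1, 0) (1, 0)) - A (a, b) (1, 0)) a :=
      ((hasDerivAt_id a).mul hF1).sub (partialFst (hVd _ hp))
    have : pderivFst (fun q => q.1 ^ 2 * pderivFst (fun r => Vhat r / r.1) q) (a, b)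
        = 1 * A (a, b) (1, 0) + a * (A2 (1, 0) (1, 0)) - A (a, b) (1, 0) := by
      rw [pderivFst]
      rw [show (fun s => (fun q : ℝ × ℝ => q.1 ^ 2 * pderivFst (fun r => Vhat r / r.1) q) (s, b))
          = fun s => (s : ℝ) ^ 2 * pderivFst (fun r => Vhat r / r.1) (s, b) from rfl]
      rw [heq.deriv_eq, hg.deriv]
    rw [this]; ring
  -- second term of the goal
  have hT2 : pderivSnd (pderivSnd (fun r => Vhat r / r.1)) (a, b)
      = A2 (0, 1) (0, 1) / a := by
    have heq : (fun t => pderivSnd (fun r => Vhat r / r.1) (a, t))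
        =ᶠ[nhds b] fun t => A (a, t) (0, 1) / a := by
      filter_upwards [hUb2] with t ht
      exact hW2 _ ht
    have hg : HasDerivAt (fun t => A (a, t) (0, 1) / a) (A2 (0, 1) (0, 1) / a) b :=
      hG2.div_const a
    rw [pderivSnd]
    rw [show (fun t => pderivSnd (fun r => Vhat r / r.1) ((a, b).1, t))
        = fun t => pderivSnd (fun r => Vhat r / r.1) (a, t) from rfl]
    rw [heq.deriv_eq, hg.deriv]
  rw [hT1, hT2]
  rw [show a ^ 2 * (A2 (0, 1) (0, 1) / a) = a * A2 (0, 1) (0, 1) by field_simp]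
  rw [← mul_add, hharm', mul_zero]
end

section
/- Fix an integer P ≥ 2 and real numbers N_0, N_1, …, N_P with N_0 = 0 and N_P = 0, and let R : [0, P] → ℝ be the rank function with Fourier sine coefficients a_k. Then for every integer k ≥ 1, a_k = (P/(π² k²)) Σ_{j=1}^{P−1} F_j sin(kπj/P), where F_j = 2N_j − N_{j+1} − N_{j−1}. -/
open MeasureTheory

lemma abel_sum (n : ℕ) (u v : ℕ → ℝ) :
    ∑ l ∈ Finset.range (n+1), (u (l+1) - u l) * (v (l+1) - v l)
      = ∑ j ∈ Finset.range n, (2*u (j+1) - u (j+2) - u j) * v (j+1)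
        + u (n+1) * v (n+1) + u 0 * v 0 - u 1 * v 0 - u n * v (n+1) := by
  induction n with
  | zero => simp; ring
  | succ m ih => rw [Finset.sum_range_succ, ih, Finset.sum_range_succ]; ring

lemma piece_deriv (c A B lr : ℝ) (hc : c ≠ 0) (x : ℝ) :
    HasDerivAt (fun η => (-((A + B*(η - lr)) * Real.cos (c*η)))/c + (B * Real.sin (c*η))/c^2)
      ((A + B*(x - lr)) * Real.sin (c*x)) x := by
  have hlin : HasDerivAt (fun η : ℝ => c*η) c x := by
    simpa using (hasDerivAt_id x).const_mul c
  have h1 : HasDerivAt (fun η => A + B*(η - lr)) B x := by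
    simpa using (((hasDerivAt_id x).sub_const lr).const_mul B).const_add A
  have h2 : HasDerivAt (fun η => Real.cos (c*η)) (-Real.sin (c*x)*c) x :=
    (Real.hasDerivAt_cos (c*x)).comp x hlin
  have h3 : HasDerivAt (fun η => Real.sin (c*η)) (Real.cos (c*x)*c) x :=
    (Real.hasDerivAt_sin (c*x)).comp x hlin
  have h := (((h1.mul h2).neg).div_const c).add ((h3.const_mul B).div_const (c^2))
  refine HasDerivAt.congr_deriv h ?_
  field_simp
  ring

lemma piece_integral (c A B lr : ℝ) (hc : c ≠ 0) :
    ∫ η in lr..(lr+1), (A + B*(η - lr)) * Real.sin (c*η)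
      = ((-( (A+B) * Real.cos (c*(lr+1))))/c + (B * Real.sin (c*(lr+1)))/c^2)
        - ((-(A * Real.cos (c*lr)))/c + (B * Real.sin (c*lr))/c^2) := by
  have h := intervalIntegral.integral_eq_sub_of_hasDerivAt
    (f := fun η => (-((A + B*(η - lr)) * Real.cos (c*η)))/c + (B * Real.sin (c*η))/c^2)
    (fun x _ => piece_deriv c A B lr hc x)
    (Continuous.intervalIntegrable (by continuity) lr (lr+1))
  rw [h]
  ring_nf


/-- The Fourier sine coefficients of the piecewise linear rank function are
`a_k = (P/(π²k²)) Σ_{j=1}^{P−1} F_j sin(kπj/P)` with `F_j = 2N_j − N_{j+1} − N_{j−1}`. -/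
theorem stmt4 (P : ℕ) (hP : 2 ≤ P) (N : ℕ → ℝ) (hN0 : N 0 = 0) (hNP : N P = 0)
    (R : ℝ → ℝ)
    (hR : ∀ l : ℕ, l < P → ∀ η ∈ Set.Icc (l : ℝ) ((l : ℝ) + 1),
      R η = N l + (N (l + 1) - N l) * (η - l))
    (a : ℕ → ℝ)
    (ha : ∀ k : ℕ, a k = (1 / (P : ℝ)) *
      ∫ η in (0 : ℝ)..(P : ℝ), R η * Real.sin ((k : ℝ) * Real.pi * η / P)) :
    ∀ k : ℕ, 1 ≤ k →
      a k = ((P : ℝ) / (Real.pi ^ 2 * (k : ℝ) ^ 2)) *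
        ∑ j ∈ Finset.Icc 1 (P - 1),
          (2 * N j - N (j + 1) - N (j - 1)) * Real.sin ((k : ℝ) * Real.pi * (j : ℝ) / P) := by
  intro k hk
  have hPpos : (0:ℝ) < P := by
    have : (2:ℝ) ≤ P := by exact_mod_cast hP
    linarith
  have hkpos : (0:ℝ) < k := by exact_mod_cast hk
  set c : ℝ := (k:ℝ)*Real.pi/(P:ℝ) with hc
  have hcpos : 0 < c := div_pos (mul_pos hkpos Real.pi_pos) hPpos
  have hc0 : c ≠ 0 := ne_of_gt hcpos
  set f : ℝ → ℝ := fun η => R η * Real.sin ((k : ℝ) * Real.pi * η / P) with hf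
  set g : ℕ → ℝ → ℝ := fun l η => (N l + (N (l+1) - N l)*(η - (l:ℝ))) * Real.sin (c*η) with hg
  -- Step A : split the integral
  have heq : ∀ l : ℕ, l < P → Set.EqOn f (g l) (Set.uIcc (l:ℝ) ((l:ℝ)+1)) := by
    intro l hl x hx
    rw [Set.uIcc_of_le (by linarith)] at hx
    simp only [hf, hg]
    rw [hR l hl x hx]
    congr 2
    rw [hc]; ring
  have hint : ∀ l : ℕ, l < P → IntervalIntegrable f volume (l:ℝ) ((l:ℝ)+1) := by
    intro l hl
    have hgint : IntervalIntegrable (g l) volume (l:ℝ) ((l:ℝ)+1) :=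
      Continuous.intervalIntegrable (by fun_prop) _ _
    apply hgint.congr
    intro x hx
    exact (heq l hl (Set.uIoc_subset_uIcc hx)).symm
  have hadj := intervalIntegral.sum_integral_adjacent_intervals (μ := volume)
    (a := fun i : ℕ => (i:ℝ)) (f := f) (n := P) (by
      intro i hi
      push_cast
      exact hint i hi)
  simp only [Nat.cast_zero] at hadj
  have hsplit : ∫ η in (0:ℝ)..(P:ℝ), f η
      = ∑ l ∈ Finset.range P, ∫ η in ((l:ℝ))..((l:ℝ)+1), g l η := by
    rw [← hadj]
    apply Finset.sum_congr rfl
    intro l hl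
    have h1 : ((l+1 : ℕ):ℝ) = (l:ℝ)+1 := by push_cast; ring
    rw [h1]
    exact intervalIntegral.integral_congr (heq l (Finset.mem_range.mp hl))
  -- Step B : evaluate each piece
  have hpiece : ∀ l : ℕ, ∫ η in ((l:ℝ))..((l:ℝ)+1), g l η
      = ((-(N (l+1) * Real.cos (c*((l:ℝ)+1))))/c + ((N (l+1) - N l) * Real.sin (c*((l:ℝ)+1)))/c^2)
        - ((-(N l * Real.cos (c*(l:ℝ))))/c + ((N (l+1) - N l) * Real.sin (c*(l:ℝ)))/c^2) := by
    intro l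
    have := piece_integral c (N l) (N (l+1) - N l) (l:ℝ) hc0
    simp only [hg]
    rw [this]
    ring_nf
  -- Step C : sum it up
  set v : ℕ → ℝ := fun j => Real.sin (c*(j:ℝ)) with hv
  have hv0 : v 0 = 0 := by simp [hv]
  have hvP : v P = 0 := by
    have hcP : c*(P:ℝ) = (k:ℝ)*Real.pi := by
      rw [hc]; field_simp
    simp only [hv, hcP]
    exact_mod_cast Real.sin_nat_mul_pi k
  have hsum : ∑ l ∈ Finset.range P, ∫ η in ((l:ℝ))..((l:ℝ)+1), g l η
      = ∑ l ∈ Finset.range P,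
          ((N l * Real.cos (c*(l:ℝ))/c - N (l+1) * Real.cos (c*((l:ℝ)+1))/c)
            + (1/c^2) * ((N (l+1) - N l) * (v (l+1) - v l))) := by
    apply Finset.sum_congr rfl
    intro l _
    rw [hpiece l]
    simp only [hv]
    push_cast
    ring
  rw [hf] at hsplit
  rw [ha k, hsplit, hsum, Finset.sum_add_distrib]
  have htel : ∑ l ∈ Finset.range P,
      (N l * Real.cos (c*(l:ℝ))/c - N (l+1) * Real.cos (c*((l:ℝ)+1))/c) = 0 := by
    have := Finset.sum_range_sub' (f := fun j : ℕ => N j * Real.cos (c*(j:ℝ))/c) P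
    rw [show (∑ l ∈ Finset.range P,
        (N l * Real.cos (c*(l:ℝ))/c - N (l+1) * Real.cos (c*((l:ℝ)+1))/c))
      = ∑ l ∈ Finset.range P,
        ((fun j : ℕ => N j * Real.cos (c*(j:ℝ))/c) l
          - (fun j : ℕ => N j * Real.cos (c*(j:ℝ))/c) (l+1)) from by
        apply Finset.sum_congr rfl; intro l _; push_cast; ring]
    rw [this, hN0, hNP]
    ring
  rw [htel]
  have habel : ∑ l ∈ Finset.range P, (1/c^2) * ((N (l+1) - N l) * (v (l+1) - v l))
      = (1/c^2) * ∑ j ∈ Finset.range (P-1), (2*N (j+1) - N (j+2) - N j) * v (j+1) := by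
    rw [← Finset.mul_sum]
    congr 1
    have hP1 : P = (P-1)+1 := by omega
    rw [hP1, abel_sum (P-1) N v, ← hP1, hv0, hvP, hN0]
    ring
  rw [habel]
  -- Step D : rewrite RHS sum and constants
  have hIcc : ∑ j ∈ Finset.Icc 1 (P - 1),
        (2 * N j - N (j + 1) - N (j - 1)) * Real.sin ((k : ℝ) * Real.pi * (j : ℝ) / P)
      = ∑ j ∈ Finset.range (P-1), (2*N (j+1) - N (j+2) - N j) * v (j+1) := by
    have hIco : Finset.Icc 1 (P-1) = Finset.Ico 1 P := by
      rw [← Finset.Ico_add_one_right_eq_Icc]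
      congr 1
      omega
    rw [hIco, Finset.sum_Ico_eq_sum_range]
    have : P - 1 = P - 1 := rfl
    apply Finset.sum_congr rfl
    intro i _
    have e1 : 1 + i - 1 = i := by omega
    have e2 : 1 + i + 1 = i + 2 := by omega
    have e3 : 1 + i = i + 1 := by omega
    rw [e1, e2, e3]
    congr 1
    simp only [hv]
    rw [hc]
    push_cast
    ring_nf
  rw [hIcc]
  rw [hc]
  have hpne : Real.pi ≠ 0 := Real.pi_ne_zero
  have hkne : (k:ℝ) ≠ 0 := ne_of_gt hkpos
  have hPne : (P:ℝ) ≠ 0 := ne_of_gt hPpos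
  field_simp
  ring
end

section
/- Fix a real number P > 0, an integer K ≥ 1 and real numbers a_1, …, a_K. Define V̂(σ,η) = Σ_{k=1}^K a_k cos(kπη/P) e^{−kπ|σ|/P}. Then the double integral of −σ (∂_η V̂)(∂²_{ση} V̂) over (σ,η) ∈ (ℝ ∖ {0}) × [0, P] exists and equals (π/4) Σ_{k=1}^K k a_k². -/
open MeasureTheory

section Aux

open Real Set

lemma aux_abs_exp_integrable {m : ℝ} (hm : 0 < m) :
    Integrable (fun σ : ℝ => |σ| * Real.exp (-(m * |σ|))) := by
  set f : ℝ → ℝ := fun t => t * Real.exp (-(m * t)) with hf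
  have hIoi : IntegrableOn f (Ioi 0) := by
    have h := integrableOn_rpow_mul_exp_neg_mul_rpow (by norm_num : (-1:ℝ) < 1) zero_lt_one hm
    simpa [f, Real.rpow_one, neg_mul] using h
  have hcomp : IntegrableOn (fun σ : ℝ => f |σ|) (Ioi 0) :=
    hIoi.congr_fun (fun x hx => by rw [abs_of_pos hx]) measurableSet_Ioi
  have int_Iic : IntegrableOn (fun x : ℝ => f |x|) (Iic 0) := by
    rw [← Measure.map_neg_eq_self (volume : Measure ℝ)]
    have m' : MeasurableEmbedding fun x : ℝ => -x := (Homeomorph.neg ℝ).measurableEmbedding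
    rw [m'.integrableOn_map_iff]
    simp only [Function.comp_def, abs_neg, Set.neg_preimage, Set.neg_Iic, neg_zero]
    exact Iff.mpr integrableOn_Ici_iff_integrableOn_Ioi hcomp
  have h := int_Iic.union hcomp
  rw [Set.Iic_union_Ioi] at h
  exact integrableOn_univ.mp h

lemma aux_abs_exp_integral {m : ℝ} (hm : 0 < m) :
    (∫ σ : ℝ, |σ| * Real.exp (-(m * |σ|))) = 2 / m ^ 2 := by
  have h : (∫ σ : ℝ, |σ| * Real.exp (-(m * |σ|)))
      = 2 * ∫ x in Ioi (0:ℝ), x * Real.exp (-(m * x)) :=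
    integral_comp_abs (f := fun t => t * Real.exp (-(m * t)))
  have h2 := Real.integral_rpow_mul_exp_neg_mul_Ioi (by norm_num : (0:ℝ) < 2) hm
  have h3 : (∫ x in Ioi (0:ℝ), x * Real.exp (-(m * x))) = (1/m) ^ (2:ℝ) * Real.Gamma 2 := by
    rw [← h2]
    refine setIntegral_congr_fun measurableSet_Ioi (fun x hx => ?_)
    norm_num [Real.rpow_one]
  rw [h, h3, Real.Gamma_two, Real.rpow_two]
  field_simp

lemma aux_cos_int {r : ℝ} (P : ℝ) (hr : r ≠ 0) :
    ∫ η in (0:ℝ)..P, Real.cos (r * η) = Real.sin (r * P) / r := by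
  rw [intervalIntegral.integral_comp_mul_left (fun x => Real.cos x) hr]
  simp [smul_eq_mul, inv_mul_eq_div]

lemma aux_sin_orth {P : ℝ} (hP : 0 < P) (j k : ℕ) (hj : 1 ≤ j) (hk : 1 ≤ k) :
    ∫ η in Set.Icc (0:ℝ) P,
        Real.sin ((j:ℝ) * Real.pi * η / P) * Real.sin ((k:ℝ) * Real.pi * η / P)
      = if j = k then P / 2 else 0 := by
  have hπ := Real.pi_pos
  rw [MeasureTheory.integral_Icc_eq_integral_Ioc, ← intervalIntegral.integral_of_le hP.le]
  have key : ∀ η : ℝ, Real.sin ((j:ℝ) * Real.pi * η / P) * Real.sin ((k:ℝ) * Real.pi * η / P)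
      = (Real.cos ((((j:ℝ) - k) * Real.pi / P) * η)
        - Real.cos ((((j:ℝ) + k) * Real.pi / P) * η)) / 2 := by
    intro η
    have h1 : (((j:ℝ) - k) * Real.pi / P) * η
        = (j:ℝ) * Real.pi * η / P - (k:ℝ) * Real.pi * η / P := by ring
    have h2 : (((j:ℝ) + k) * Real.pi / P) * η
        = (j:ℝ) * Real.pi * η / P + (k:ℝ) * Real.pi * η / P := by ring
    rw [h1, h2, Real.cos_sub, Real.cos_add]; ring
  rw [intervalIntegral.integral_congr (fun η _ => key η)]
  have hint : ∀ r : ℝ, IntervalIntegrable (fun η => Real.cos (r * η)) volume 0 P := by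
    intro r
    exact (Real.continuous_cos.comp (continuous_const.mul continuous_id)).intervalIntegrable 0 P
  rw [intervalIntegral.integral_div, intervalIntegral.integral_sub (hint _) (hint _)]
  rcases eq_or_ne j k with h | h
  · subst h
    rw [if_pos rfl]
    have e1 : ∫ η in (0:ℝ)..P, Real.cos ((((j:ℝ) - j) * Real.pi / P) * η) = P := by
      simp
    have hr2 : (((j:ℝ) + j) * Real.pi / P) ≠ 0 := by
      have : (0:ℝ) < (j:ℝ) := by exact_mod_cast hj
      positivity
    have e2 : ∫ η in (0:ℝ)..P, Real.cos ((((j:ℝ) + j) * Real.pi / P) * η) = 0 := by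
      rw [aux_cos_int P hr2]
      have : (((j:ℝ) + j) * Real.pi / P) * P = ((2 * j : ℤ) : ℝ) * Real.pi := by
        rw [div_mul_cancel₀ _ hP.ne']; push_cast; ring
      rw [this, Real.sin_int_mul_pi]
      simp
    rw [e1, e2]; ring
  · rw [if_neg h]
    have hjk : (j:ℝ) ≠ (k:ℝ) := by exact_mod_cast h
    have hr1 : (((j:ℝ) - k) * Real.pi / P) ≠ 0 := by
      apply div_ne_zero _ hP.ne'
      exact mul_ne_zero (sub_ne_zero.mpr hjk) hπ.ne'
    have hr2 : (((j:ℝ) + k) * Real.pi / P) ≠ 0 := by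
      have h0 : (0:ℝ) < (j:ℝ) := by exact_mod_cast hj
      positivity
    have e1 : ∫ η in (0:ℝ)..P, Real.cos ((((j:ℝ) - k) * Real.pi / P) * η) = 0 := by
      rw [aux_cos_int P hr1]
      have : (((j:ℝ) - k) * Real.pi / P) * P = (((j:ℤ) - k : ℤ) : ℝ) * Real.pi := by
        rw [div_mul_cancel₀ _ hP.ne']; push_cast; ring
      rw [this, Real.sin_int_mul_pi]; simp
    have e2 : ∫ η in (0:ℝ)..P, Real.cos ((((j:ℝ) + k) * Real.pi / P) * η) = 0 := by
      rw [aux_cos_int P hr2]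
      have : (((j:ℝ) + k) * Real.pi / P) * P = (((j:ℤ) + k : ℤ) : ℝ) * Real.pi := by
        rw [div_mul_cancel₀ _ hP.ne']; push_cast; ring
      rw [this, Real.sin_int_mul_pi]; simp
    rw [e1, e2]; ring

lemma aux_hDsnd (P : ℝ) (K : ℕ) (a : ℕ → ℝ) (Vhat : ℝ × ℝ → ℝ)
    (hV : Vhat = fun p => ∑ k ∈ Finset.Icc 1 K,
      a k * Real.cos ((k : ℝ) * Real.pi * p.2 / P) *
        Real.exp (-((k : ℝ) * Real.pi * |p.1| / P))) (p : ℝ × ℝ) :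
    pderivSnd Vhat p = ∑ k ∈ Finset.Icc 1 K,
      a k * (-Real.sin ((k:ℝ) * Real.pi * p.2 / P) * ((k:ℝ) * Real.pi / P)) *
        Real.exp (-((k : ℝ) * Real.pi * |p.1| / P)) := by
  subst hV
  unfold pderivSnd
  have hD : HasDerivAt (fun t => ∑ k ∈ Finset.Icc 1 K,
      a k * Real.cos ((k : ℝ) * Real.pi * t / P) *
        Real.exp (-((k : ℝ) * Real.pi * |p.1| / P)))
      (∑ k ∈ Finset.Icc 1 K,
      a k * (-Real.sin ((k:ℝ) * Real.pi * p.2 / P) * ((k:ℝ) * Real.pi / P)) *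
        Real.exp (-((k : ℝ) * Real.pi * |p.1| / P))) p.2 := by
    apply HasDerivAt.fun_sum
    intro k _
    have h1 : HasDerivAt (fun t : ℝ => (k:ℝ) * Real.pi * t / P) ((k:ℝ) * Real.pi / P) p.2 := by
      simpa using (((hasDerivAt_id p.2).const_mul ((k:ℝ) * Real.pi)).div_const P)
    exact (h1.cos.const_mul (a k)).mul_const _
  exact hD.deriv

lemma aux_hDfst (P : ℝ) (K : ℕ) (a : ℕ → ℝ) (Vhat : ℝ × ℝ → ℝ)
    (hV : Vhat = fun p => ∑ k ∈ Finset.Icc 1 K,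
      a k * Real.cos ((k : ℝ) * Real.pi * p.2 / P) *
        Real.exp (-((k : ℝ) * Real.pi * |p.1| / P))) (p : ℝ × ℝ) (hx : p.1 ≠ 0) :
    pderivFst (pderivSnd Vhat) p = ∑ k ∈ Finset.Icc 1 K,
      (a k * (-Real.sin ((k:ℝ) * Real.pi * p.2 / P) * ((k:ℝ) * Real.pi / P))) *
        (Real.exp (-((k : ℝ) * Real.pi * |p.1| / P)) *
          (-((k:ℝ) * Real.pi * (SignType.sign p.1 : ℝ) / P))) := by
  unfold pderivFst
  have hfun : (fun s => pderivSnd Vhat (s, p.2)) = fun s => ∑ k ∈ Finset.Icc 1 K,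
      a k * (-Real.sin ((k:ℝ) * Real.pi * p.2 / P) * ((k:ℝ) * Real.pi / P)) *
        Real.exp (-((k : ℝ) * Real.pi * |s| / P)) := by
    funext s
    exact aux_hDsnd P K a Vhat hV (s, p.2)
  rw [hfun]
  have hD : HasDerivAt (fun s : ℝ => ∑ k ∈ Finset.Icc 1 K,
      a k * (-Real.sin ((k:ℝ) * Real.pi * p.2 / P) * ((k:ℝ) * Real.pi / P)) *
        Real.exp (-((k : ℝ) * Real.pi * |s| / P)))
      (∑ k ∈ Finset.Icc 1 K,
      (a k * (-Real.sin ((k:ℝ) * Real.pi * p.2 / P) * ((k:ℝ) * Real.pi / P))) *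
        (Real.exp (-((k : ℝ) * Real.pi * |p.1| / P)) *
          (-((k:ℝ) * Real.pi * (SignType.sign p.1 : ℝ) / P)))) p.1 := by
    apply HasDerivAt.fun_sum
    intro k _
    have habs : HasDerivAt (fun s : ℝ => |s|) ((SignType.sign p.1 : ℝ)) p.1 := hasDerivAt_abs hx
    have h1 : HasDerivAt (fun s : ℝ => -((k:ℝ) * Real.pi * |s| / P))
        (-((k:ℝ) * Real.pi * (SignType.sign p.1 : ℝ) / P)) p.1 :=
      ((habs.const_mul ((k:ℝ) * Real.pi)).div_const P).neg
    exact h1.exp.const_mul _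
  exact hD.deriv

end Aux

/-- For the finite Fourier potential `V̂`, the integral of `−σ (∂_η V̂)(∂²_{ση} V̂)`
over `(ℝ \ {0}) × [0,P]` exists and equals `(π/4) Σ_{k=1}^K k a_k²`. -/
theorem stmt6 (P : ℝ) (hP : 0 < P) (K : ℕ) (hK : 1 ≤ K) (a : ℕ → ℝ)
    (Vhat : ℝ × ℝ → ℝ)
    (hV : Vhat = fun p => ∑ k ∈ Finset.Icc 1 K,
      a k * Real.cos ((k : ℝ) * Real.pi * p.2 / P) *
        Real.exp (-((k : ℝ) * Real.pi * |p.1| / P))) :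
    IntegrableOn
      (fun p : ℝ × ℝ => -p.1 * pderivSnd Vhat p * pderivFst (pderivSnd Vhat) p)
      (({0}ᶜ : Set ℝ) ×ˢ Set.Icc (0 : ℝ) P) ∧
    ∫ p in (({0}ᶜ : Set ℝ) ×ˢ Set.Icc (0 : ℝ) P),
        -p.1 * pderivSnd Vhat p * pderivFst (pderivSnd Vhat) p
      = (Real.pi / 4) * ∑ k ∈ Finset.Icc 1 K, (k : ℝ) * a k ^ 2 := by
  have hπ := Real.pi_pos
  set S : Set (ℝ × ℝ) := (({0}ᶜ : Set ℝ) ×ˢ Set.Icc (0 : ℝ) P) with hS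
  have hSmeas : MeasurableSet S :=
    ((measurableSet_singleton (0:ℝ)).compl).prod measurableSet_Icc
  -- the nice product-form function
  set g : ℝ × ℝ → ℝ := fun p => ∑ j ∈ Finset.Icc 1 K, ∑ k ∈ Finset.Icc 1 K,
      (a j * a k * ((j:ℝ) * Real.pi / P) * ((k:ℝ) * Real.pi / P) ^ 2) *
      ((|p.1| * Real.exp (-((((j:ℝ) + k) * Real.pi / P) * |p.1|))) *
        (Real.sin ((j:ℝ) * Real.pi * p.2 / P) * Real.sin ((k:ℝ) * Real.pi * p.2 / P)))
      with hg
  -- positivity of the exponential rates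
  have hm : ∀ j ∈ Finset.Icc 1 K, ∀ k ∈ Finset.Icc 1 K, 0 < ((j:ℝ) + k) * Real.pi / P := by
    intro j hj k hk
    have hj1 : 1 ≤ j := (Finset.mem_Icc.mp hj).1
    have : (0:ℝ) < (j:ℝ) := by exact_mod_cast hj1
    positivity
  -- equality of the integrand and g on S
  have hEq : Set.EqOn
      (fun p : ℝ × ℝ => -p.1 * pderivSnd Vhat p * pderivFst (pderivSnd Vhat) p) g S := by
    intro p hp
    have hx : p.1 ≠ 0 := by
      have h1 := (Set.mem_prod.mp hp).1
      simpa using h1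
    simp only
    rw [aux_hDsnd P K a Vhat hV p, aux_hDfst P K a Vhat hV p hx, hg]
    rw [mul_assoc, Finset.sum_mul_sum, Finset.mul_sum]
    refine Finset.sum_congr rfl (fun j hj => ?_)
    rw [Finset.mul_sum]
    refine Finset.sum_congr rfl (fun k hk => ?_)
    have hexp : Real.exp (-((j:ℝ) * Real.pi * |p.1| / P)) *
        Real.exp (-((k:ℝ) * Real.pi * |p.1| / P))
        = Real.exp (-((((j:ℝ) + k) * Real.pi / P) * |p.1|)) := by
      rw [← Real.exp_add]; congr 1; ring
    rw [← hexp]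
    rw [← self_mul_sign p.1]
    ring
  -- integrability of each term of g
  have hterm : ∀ j ∈ Finset.Icc 1 K, ∀ k ∈ Finset.Icc 1 K,
      IntegrableOn (fun p : ℝ × ℝ =>
        (a j * a k * ((j:ℝ) * Real.pi / P) * ((k:ℝ) * Real.pi / P) ^ 2) *
        ((|p.1| * Real.exp (-((((j:ℝ) + k) * Real.pi / P) * |p.1|))) *
          (Real.sin ((j:ℝ) * Real.pi * p.2 / P) * Real.sin ((k:ℝ) * Real.pi * p.2 / P)))) S := by
    intro j hj k hk
    rw [hS, IntegrableOn, Measure.volume_eq_prod, ← Measure.prod_restrict]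
    refine Integrable.const_mul ?_ _
    refine Integrable.mul_prod (L := ℝ)
      (f := fun σ : ℝ => |σ| * Real.exp (-((((j:ℝ) + k) * Real.pi / P) * |σ|)))
      (g := fun η : ℝ => Real.sin ((j:ℝ) * Real.pi * η / P) *
        Real.sin ((k:ℝ) * Real.pi * η / P)) ?_ ?_
    · exact ((aux_abs_exp_integrable (hm j hj k hk)).restrict)
    · exact Continuous.integrableOn_Icc (by fun_prop)
  have hgInt : IntegrableOn g S := by
    rw [hg]
    refine integrable_finset_sum _ (fun j hj => ?_)
    exact integrable_finset_sum _ (fun k hk => hterm j hj k hk)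
  constructor
  · exact (hgInt.congr_fun (fun p hp => (hEq hp).symm) hSmeas)
  · rw [setIntegral_congr_fun hSmeas hEq, hg]
    rw [integral_finset_sum _ (fun j hj =>
      integrable_finset_sum _ (fun k hk => hterm j hj k hk))]
    have hval : ∀ j ∈ Finset.Icc 1 K, ∀ k ∈ Finset.Icc 1 K,
        (∫ p in S, (a j * a k * ((j:ℝ) * Real.pi / P) * ((k:ℝ) * Real.pi / P) ^ 2) *
          ((|p.1| * Real.exp (-((((j:ℝ) + k) * Real.pi / P) * |p.1|))) *
            (Real.sin ((j:ℝ) * Real.pi * p.2 / P) * Real.sin ((k:ℝ) * Real.pi * p.2 / P))))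
        = (a j * a k * ((j:ℝ) * Real.pi / P) * ((k:ℝ) * Real.pi / P) ^ 2) *
          ((2 / (((j:ℝ) + k) * Real.pi / P) ^ 2) * (if j = k then P / 2 else 0)) := by
      intro j hj k hk
      rw [integral_const_mul (a j * a k * ((j:ℝ) * Real.pi / P) * ((k:ℝ) * Real.pi / P) ^ 2)]
      congr 1
      have h1d : (∫ σ in ({0}ᶜ : Set ℝ),
          |σ| * Real.exp (-((((j:ℝ) + k) * Real.pi / P) * |σ|)))
          = 2 / (((j:ℝ) + k) * Real.pi / P) ^ 2 := by
        have hae : ({0}ᶜ : Set ℝ) =ᵐ[volume] Set.univ := by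
          rw [MeasureTheory.ae_eq_univ]
          simp
        rw [setIntegral_congr_set hae, MeasureTheory.setIntegral_univ]
        exact aux_abs_exp_integral (hm j hj k hk)
      calc (∫ p in S, (|p.1| * Real.exp (-((((j:ℝ) + k) * Real.pi / P) * |p.1|))) *
            (Real.sin ((j:ℝ) * Real.pi * p.2 / P) * Real.sin ((k:ℝ) * Real.pi * p.2 / P)))
          = ∫ p in (({0}ᶜ : Set ℝ) ×ˢ Set.Icc (0 : ℝ) P),
            (|p.1| * Real.exp (-((((j:ℝ) + k) * Real.pi / P) * |p.1|))) *
            (Real.sin ((j:ℝ) * Real.pi * p.2 / P) * Real.sin ((k:ℝ) * Real.pi * p.2 / P))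
              ∂((volume : Measure ℝ).prod (volume : Measure ℝ)) := by
            rw [hS, Measure.volume_eq_prod]
        _ = (∫ σ in ({0}ᶜ : Set ℝ),
              |σ| * Real.exp (-((((j:ℝ) + k) * Real.pi / P) * |σ|))) *
            (∫ η in Set.Icc (0:ℝ) P,
              Real.sin ((j:ℝ) * Real.pi * η / P) * Real.sin ((k:ℝ) * Real.pi * η / P)) :=
            setIntegral_prod_mul
              (fun σ : ℝ => |σ| * Real.exp (-((((j:ℝ) + k) * Real.pi / P) * |σ|)))
              (fun η : ℝ => Real.sin ((j:ℝ) * Real.pi * η / P) *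
                Real.sin ((k:ℝ) * Real.pi * η / P)) _ _
        _ = (2 / (((j:ℝ) + k) * Real.pi / P) ^ 2) * (if j = k then P / 2 else 0) := by
            rw [h1d, aux_sin_orth hP j k (Finset.mem_Icc.mp hj).1 (Finset.mem_Icc.mp hk).1]
    calc (∑ j ∈ Finset.Icc 1 K, ∫ p in S, ∑ k ∈ Finset.Icc 1 K,
          (a j * a k * ((j:ℝ) * Real.pi / P) * ((k:ℝ) * Real.pi / P) ^ 2) *
          ((|p.1| * Real.exp (-((((j:ℝ) + k) * Real.pi / P) * |p.1|))) *
            (Real.sin ((j:ℝ) * Real.pi * p.2 / P) * Real.sin ((k:ℝ) * Real.pi * p.2 / P))))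
        = ∑ j ∈ Finset.Icc 1 K, ∑ k ∈ Finset.Icc 1 K,
          (a j * a k * ((j:ℝ) * Real.pi / P) * ((k:ℝ) * Real.pi / P) ^ 2) *
          ((2 / (((j:ℝ) + k) * Real.pi / P) ^ 2) * (if j = k then P / 2 else 0)) := by
          refine Finset.sum_congr rfl (fun j hj => ?_)
          rw [integral_finset_sum _ (fun k hk => hterm j hj k hk)]
          exact Finset.sum_congr rfl (fun k hk => hval j hj k hk)
      _ = (Real.pi / 4) * ∑ k ∈ Finset.Icc 1 K, (k : ℝ) * a k ^ 2 := by
          rw [Finset.mul_sum]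
          refine Finset.sum_congr rfl (fun j hj => ?_)
          rw [Finset.sum_eq_single j]
          · rw [if_pos rfl]
            have hj1 : 1 ≤ j := (Finset.mem_Icc.mp hj).1
            have hj0 : (0:ℝ) < (j:ℝ) := by exact_mod_cast hj1
            field_simp
            ring
          · intro k hk hkj
            rw [if_neg (fun h => hkj h.symm)]
            ring
          · intro h; exact absurd hj h
end

section
/- Fix an integer P ≥ 2 and real numbers N_0, N_1, …, N_P with N_0 = 0 and N_P = 0, let R : [0, P] → ℝ be the rank function with Fourier sine coefficients a_k, and set F_j = 2N_j − N_{j+1} − N_{j−1} for j = 1, …, P−1. Then the holographic central charge satisfies (π/8) Σ_{k=1}^∞ k a_k² = (P²/(16π³)) Σ_{j=1}^{P−1} Σ_{l=1}^{P−1} F_j F_l Σ_{k=1}^∞ [cos(kπ(j−l)/P) − cos(kπ(j+l)/P)]/k³, with all series absolutely convergent. -/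
open MeasureTheory

lemma stmt7_seg (A B clo c : ℝ) (hc : c ≠ 0) :
    ∫ η in clo..(clo+1), (A + B*(η-clo)) * Real.sin (c*η)
      = (A * Real.cos (c*clo) - (A+B) * Real.cos (c*(clo+1)))/c
        + B*(Real.sin (c*(clo+1)) - Real.sin (c*clo))/c^2 := by
  have key : ∀ η : ℝ, HasDerivAt
      (fun η => -((A + B*(η-clo)) * Real.cos (c*η))/c + B * Real.sin (c*η)/c^2)
      ((A + B*(η-clo)) * Real.sin (c*η)) η := by
    intro η
    have h1 : HasDerivAt (fun η : ℝ => A + B*(η-clo)) B η := by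
      simpa using (((hasDerivAt_id η).sub_const clo).const_mul B).const_add A
    have hc' : HasDerivAt (fun η : ℝ => c * η) c η := by
      simpa using (hasDerivAt_id η).const_mul c
    have h2 : HasDerivAt (fun η : ℝ => Real.cos (c*η)) (-Real.sin (c*η) * c) η :=
      (Real.hasDerivAt_cos (c*η)).comp η hc'
    have h3 : HasDerivAt (fun η : ℝ => Real.sin (c*η)) (Real.cos (c*η) * c) η :=
      (Real.hasDerivAt_sin (c*η)).comp η hc'
    have h := (((h1.mul h2).neg.div_const c).add ((h3.const_mul B).div_const (c^2)))
    exact h.congr_deriv (by field_simp; ring)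
  rw [intervalIntegral.integral_eq_sub_of_hasDerivAt (fun η _ => key η)
    (by apply Continuous.intervalIntegrable; continuity)]
  field_simp
  ring

lemma stmt7_abel (Nn S : ℕ → ℝ) : ∀ n : ℕ, 1 ≤ n →
    ∑ l ∈ Finset.range n, (Nn (l+1) - Nn l) * (S (l+1) - S l)
      = ∑ j ∈ Finset.Icc 1 (n-1), (2*Nn j - Nn (j+1) - Nn (j-1)) * S j
        + (Nn n - Nn (n-1)) * S n - (Nn 1 - Nn 0) * S 0 := by
  intro n hn
  induction n, hn using Nat.le_induction with
  | base => simp; ring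
  | succ n hn ih =>
    rw [Finset.sum_range_succ, ih]
    have h1 : n + 1 - 1 = n := rfl
    rw [h1]
    have h2 : n - 1 + 1 = n := Nat.succ_pred_eq_of_pos hn
    rw [← h2, Finset.sum_Icc_succ_top (by omega)]
    rw [h2]
    ring

lemma stmt7_sinsin (x y : ℝ) :
    Real.sin x * Real.sin y = (Real.cos (x - y) - Real.cos (x + y))/2 := by
  rw [Real.cos_sub, Real.cos_add]; ring

/-- The holographic central charge of a balanced linear quiver:
`(π/8) Σ_k k a_k² = (P²/(16π³)) Σ_{j,l=1}^{P−1} F_j F_l Σ_k (cos(kπ(j−l)/P) − cos(kπ(j+l)/P))/k³`,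
with all series absolutely convergent. -/
theorem stmt7 (P : ℕ) (hP : 2 ≤ P) (N : ℕ → ℝ) (hN0 : N 0 = 0) (hNP : N P = 0)
    (R : ℝ → ℝ)
    (hR : ∀ l : ℕ, l < P → ∀ η ∈ Set.Icc (l : ℝ) ((l : ℝ) + 1),
      R η = N l + (N (l + 1) - N l) * (η - l))
    (a : ℕ → ℝ)
    (ha : ∀ k : ℕ, a k = (1 / (P : ℝ)) *
      ∫ η in (0 : ℝ)..(P : ℝ), R η * Real.sin ((k : ℝ) * Real.pi * η / P))
    (F : ℕ → ℝ) (hF : ∀ j : ℕ, 1 ≤ j → j ≤ P - 1 → F j = 2 * N j - N (j + 1) - N (j - 1)) :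
    Summable (fun k : ℕ => ((k : ℝ) + 1) * a (k + 1) ^ 2) ∧
    (∀ j l : ℕ, Summable (fun k : ℕ =>
      (Real.cos (((k : ℝ) + 1) * Real.pi * ((j : ℝ) - (l : ℝ)) / P) -
        Real.cos (((k : ℝ) + 1) * Real.pi * ((j : ℝ) + (l : ℝ)) / P)) / ((k : ℝ) + 1) ^ 3)) ∧
    (Real.pi / 8) * ∑' k : ℕ, ((k : ℝ) + 1) * a (k + 1) ^ 2
      = ((P : ℝ) ^ 2 / (16 * Real.pi ^ 3)) *
        ∑ j ∈ Finset.Icc 1 (P - 1), ∑ l ∈ Finset.Icc 1 (P - 1),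
          F j * F l * ∑' k : ℕ,
            (Real.cos (((k : ℝ) + 1) * Real.pi * ((j : ℝ) - (l : ℝ)) / P) -
              Real.cos (((k : ℝ) + 1) * Real.pi * ((j : ℝ) + (l : ℝ)) / P)) /
              ((k : ℝ) + 1) ^ 3 := by

  have hPpos : (0:ℝ) < P := by
    have : (0:ℕ) < P := by omega
    exact_mod_cast this
  have hPne : (P:ℝ) ≠ 0 := ne_of_gt hPpos
  have hpi : Real.pi ≠ 0 := Real.pi_ne_zero
  -- Step 1: formula for the Fourier coefficients
  have ha' : ∀ k : ℕ, a (k+1) = ((P:ℝ)/(((k:ℝ)+1)^2*Real.pi^2)) *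
      ∑ j ∈ Finset.Icc 1 (P-1), F j * Real.sin (((k:ℝ)+1)*Real.pi/(P:ℝ)*(j:ℝ)) := by
    intro k
    set c : ℝ := ((k:ℝ)+1)*Real.pi/(P:ℝ) with hc
    have hcpos : 0 < c := by
      rw [hc]; positivity
    have hcne : c ≠ 0 := ne_of_gt hcpos
    set f : ℝ → ℝ := fun η => R η * Real.sin (c*η) with hf
    have heqon : ∀ l : ℕ, l < P → Set.EqOn f
        (fun η => (N l + (N (l+1) - N l)*(η-(l:ℝ))) * Real.sin (c*η))
        (Set.uIcc (l:ℝ) ((l:ℝ)+1)) := by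
      intro l hl η hη
      rw [Set.uIcc_of_le (by linarith)] at hη
      simp only [hf]
      rw [hR l hl η hη]
    have hint : ∀ l : ℕ, l < P → IntervalIntegrable f volume (l:ℝ) ((l:ℝ)+1) := by
      intro l hl
      apply ContinuousOn.intervalIntegrable
      have hcont : Continuous
          (fun η : ℝ => (N l + (N (l+1) - N l)*(η-(l:ℝ))) * Real.sin (c*η)) := by
        fun_prop
      exact hcont.continuousOn.congr (heqon l hl)
    have hsplit : ∫ η in (0:ℝ)..(P:ℝ), f η
        = ∑ l ∈ Finset.range P, ∫ η in (l:ℝ)..((l:ℝ)+1), f η := by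
      have h := intervalIntegral.sum_integral_adjacent_intervals
        (μ := volume) (a := fun n : ℕ => (n:ℝ)) (n := P)
        (fun l hl => by push_cast; exact hint l hl)
      push_cast at h
      rw [← h]
    have hseg : ∀ l ∈ Finset.range P, (∫ η in (l:ℝ)..((l:ℝ)+1), f η)
        = (N l * Real.cos (c*(l:ℝ)) - N (l+1) * Real.cos (c*((l:ℝ)+1)))/c
          + (N (l+1) - N l)*(Real.sin (c*((l:ℝ)+1)) - Real.sin (c*(l:ℝ)))/c^2 := by
      intro l hl
      rw [Finset.mem_range] at hl
      rw [intervalIntegral.integral_congr (heqon l hl), stmt7_seg _ _ _ _ hcne]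
      ring_nf
    have hS0 : Real.sin (c*((0:ℕ):ℝ)) = 0 := by norm_num
    have hSP : Real.sin (c*((P:ℕ):ℝ)) = 0 := by
      have : c*((P:ℕ):ℝ) = ((k+1:ℕ):ℝ) * Real.pi := by
        rw [hc]; push_cast; field_simp
      rw [this, Real.sin_nat_mul_pi]
    have habel := stmt7_abel N (fun m => Real.sin (c*(m:ℝ))) P (by omega)
    have hint2 : (∫ η in (0:ℝ)..(P:ℝ), f η)
        = (∑ j ∈ Finset.Icc 1 (P-1), F j * Real.sin (c*(j:ℝ)))/c^2 := by
      rw [hsplit, Finset.sum_congr rfl hseg, Finset.sum_add_distrib]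
      have htel : ∑ l ∈ Finset.range P,
          (N l * Real.cos (c*(l:ℝ)) - N (l+1) * Real.cos (c*((l:ℝ)+1)))/c = 0 := by
        rw [← Finset.sum_div]
        have : ∀ l ∈ Finset.range P,
            N l * Real.cos (c*(l:ℝ)) - N (l+1) * Real.cos (c*((l:ℝ)+1))
            = (fun m : ℕ => N m * Real.cos (c*(m:ℝ))) l
              - (fun m : ℕ => N m * Real.cos (c*(m:ℝ))) (l+1) := by
          intro l _; push_cast; ring_nf
        rw [Finset.sum_congr rfl this, Finset.sum_range_sub']
        simp [hN0, hNP]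
      have habel2 : ∑ l ∈ Finset.range P,
          (N (l+1) - N l)*(Real.sin (c*((l:ℝ)+1)) - Real.sin (c*(l:ℝ)))/c^2
          = (∑ j ∈ Finset.Icc 1 (P-1), F j * Real.sin (c*(j:ℝ)))/c^2 := by
        rw [← Finset.sum_div]
        congr 1
        have : ∀ l ∈ Finset.range P,
            (N (l+1) - N l)*(Real.sin (c*((l:ℝ)+1)) - Real.sin (c*(l:ℝ)))
            = (N (l+1) - N l)*(Real.sin (c*((l+1:ℕ):ℝ)) - Real.sin (c*((l:ℕ):ℝ))) := by
          intro l _; push_cast; ring_nf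
        rw [Finset.sum_congr rfl this, habel]
        simp only [hS0, hSP, mul_zero, add_zero, sub_zero]
        refine Finset.sum_congr rfl fun j hj => ?_
        rw [Finset.mem_Icc] at hj
        rw [hF j hj.1 hj.2]
      rw [htel, habel2, zero_add]
    have harg : ∀ η : ℝ, ((k+1:ℕ):ℝ)*Real.pi*η/(P:ℝ) = c*η := by
      intro η; rw [hc]; push_cast; ring
    rw [ha (k+1)]
    simp only [harg]
    rw [show (∫ η in (0:ℝ)..(P:ℝ), R η * Real.sin (c*η)) = ∫ η in (0:ℝ)..(P:ℝ), f η from rfl,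
      hint2, hc]
    field_simp
  -- Step 2: summability of the cosine series
  have hbase : Summable (fun k : ℕ => 1/(((k:ℝ)+1)^3)) := by
    have h := Real.summable_one_div_nat_pow.mpr (by norm_num : 2 ≤ 3)
    have h2 := (summable_nat_add_iff 1).mpr h
    apply h2.congr
    intro k; push_cast; ring
  have hsum_t : ∀ j l : ℕ, Summable (fun k : ℕ =>
      (Real.cos (((k:ℝ)+1) * Real.pi * ((j:ℝ) - (l:ℝ)) / P) -
        Real.cos (((k:ℝ)+1) * Real.pi * ((j:ℝ) + (l:ℝ)) / P)) / ((k:ℝ)+1) ^ 3) := by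
    intro j l
    apply Summable.of_abs
    apply Summable.of_nonneg_of_le (fun k => abs_nonneg _) ?_ (hbase.mul_left 2)
    intro k
    have hk3 : (0:ℝ) < ((k:ℝ)+1)^3 := by positivity
    rw [abs_div, abs_of_pos hk3]
    have hnum : |Real.cos (((k:ℝ)+1) * Real.pi * ((j:ℝ) - (l:ℝ)) / P) -
        Real.cos (((k:ℝ)+1) * Real.pi * ((j:ℝ) + (l:ℝ)) / P)| ≤ 2 := by
      calc |_ - _| ≤ |Real.cos (((k:ℝ)+1) * Real.pi * ((j:ℝ) - (l:ℝ)) / P)|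
            + |Real.cos (((k:ℝ)+1) * Real.pi * ((j:ℝ) + (l:ℝ)) / P)| := abs_sub _ _
        _ ≤ 1 + 1 := add_le_add (Real.abs_cos_le_one _) (Real.abs_cos_le_one _)
        _ = 2 := by norm_num
    calc |_| / ((k:ℝ)+1)^3 ≤ 2 / ((k:ℝ)+1)^3 := by gcongr
      _ = 2 * (1/((k:ℝ)+1)^3) := by ring
  -- Step 3: key pointwise identity
  have hprod : ∀ k j l : ℕ,
      Real.sin (((k:ℝ)+1)*Real.pi/(P:ℝ)*(j:ℝ)) * Real.sin (((k:ℝ)+1)*Real.pi/(P:ℝ)*(l:ℝ))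
      = (Real.cos (((k:ℝ)+1) * Real.pi * ((j:ℝ) - (l:ℝ)) / P) -
          Real.cos (((k:ℝ)+1) * Real.pi * ((j:ℝ) + (l:ℝ)) / P))/2 := by
    intro k j l
    rw [stmt7_sinsin]
    congr 2
    · ring
    · ring
  have hkey : ∀ k : ℕ, ((k:ℝ)+1) * a (k+1)^2
      = ((P:ℝ)^2/(2*Real.pi^4)) * ∑ j ∈ Finset.Icc 1 (P-1), ∑ l ∈ Finset.Icc 1 (P-1),
          F j * F l * ((Real.cos (((k:ℝ)+1) * Real.pi * ((j:ℝ) - (l:ℝ)) / P) -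
            Real.cos (((k:ℝ)+1) * Real.pi * ((j:ℝ) + (l:ℝ)) / P)) / ((k:ℝ)+1) ^ 3) := by
    intro k
    have hk1 : ((k:ℝ)+1) ≠ 0 := by positivity
    rw [ha' k]
    rw [show (((P:ℝ)/(((k:ℝ)+1)^2*Real.pi^2)) *
        ∑ j ∈ Finset.Icc 1 (P-1), F j * Real.sin (((k:ℝ)+1)*Real.pi/(P:ℝ)*(j:ℝ)))^2
      = ((P:ℝ)/(((k:ℝ)+1)^2*Real.pi^2))^2 *
        ((∑ j ∈ Finset.Icc 1 (P-1), F j * Real.sin (((k:ℝ)+1)*Real.pi/(P:ℝ)*(j:ℝ))) *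
         (∑ l ∈ Finset.Icc 1 (P-1), F l * Real.sin (((k:ℝ)+1)*Real.pi/(P:ℝ)*(l:ℝ))))
      from by ring]
    rw [Finset.sum_mul_sum]
    simp only [Finset.mul_sum]
    rw [Finset.sum_congr rfl (fun j hj => Finset.sum_congr rfl (fun l hl => ?_))]
    have hp := hprod k j l
    rw [show F j * Real.sin (((k:ℝ)+1)*Real.pi/(P:ℝ)*(j:ℝ)) *
        (F l * Real.sin (((k:ℝ)+1)*Real.pi/(P:ℝ)*(l:ℝ)))
      = F j * F l * (Real.sin (((k:ℝ)+1)*Real.pi/(P:ℝ)*(j:ℝ)) *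
        Real.sin (((k:ℝ)+1)*Real.pi/(P:ℝ)*(l:ℝ))) from by ring, hp]
    field_simp
  -- Step 4: summability of the main series
  have hsumin : ∀ j ∈ Finset.Icc 1 (P-1), Summable (fun k : ℕ =>
      ∑ l ∈ Finset.Icc 1 (P-1), F j * F l *
        ((Real.cos (((k:ℝ)+1) * Real.pi * ((j:ℝ) - (l:ℝ)) / P) -
          Real.cos (((k:ℝ)+1) * Real.pi * ((j:ℝ) + (l:ℝ)) / P)) / ((k:ℝ)+1) ^ 3)) := by
    intro j _
    exact summable_sum (fun l _ => (hsum_t j l).mul_left _)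
  have hsum1 : Summable (fun k : ℕ => ((k:ℝ)+1) * a (k+1)^2) := by
    have h : Summable (fun k : ℕ =>
        ∑ j ∈ Finset.Icc 1 (P-1), ∑ l ∈ Finset.Icc 1 (P-1), F j * F l *
          ((Real.cos (((k:ℝ)+1) * Real.pi * ((j:ℝ) - (l:ℝ)) / P) -
            Real.cos (((k:ℝ)+1) * Real.pi * ((j:ℝ) + (l:ℝ)) / P)) / ((k:ℝ)+1) ^ 3)) :=
      summable_sum hsumin
    exact (h.mul_left _).congr (fun k => (hkey k).symm)
  refine ⟨hsum1, hsum_t, ?_⟩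
  -- Step 5: the identity
  rw [tsum_congr hkey, tsum_mul_left]
  rw [Summable.tsum_finsetSum hsumin]
  rw [Finset.sum_congr rfl (fun j hj => Summable.tsum_finsetSum (fun l _ => (hsum_t j l).mul_left _))]
  rw [Finset.sum_congr rfl (fun j hj => Finset.sum_congr rfl
      (fun l hl => tsum_mul_left))]
  rw [← mul_assoc]
  congr 1
  field_simp
  ring
end

section
/- Fix a real number N > 0 and an even integer P = 2S with S ≥ 1, and let a_k = (N P²/((P − S) π² k²)) sin(kπS/P) be the Fourier sine coefficients of the triangular rank function. Then the holographic central charge is exactly (π/8) Σ_{k=1}^∞ k a_k² = 7 N² P² ζ(3)/(16 π³), where ζ(3) = Σ_{n=1}^∞ 1/n³. -/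
/-- For the symmetric triangular quiver (`P = 2S`) the holographic central charge is
exactly `7 N² P² ζ(3)/(16π³)`, where `ζ(3) = Σ_{n≥1} 1/n³`. -/
theorem stmt11 (N : ℝ) (hN : 0 < N) (S P : ℕ) (hS : 1 ≤ S) (hP : P = 2 * S)
    (a : ℕ → ℝ)
    (ha : ∀ k : ℕ, a k = N * (P : ℝ) ^ 2 / (((P : ℝ) - (S : ℝ)) * Real.pi ^ 2 * (k : ℝ) ^ 2) *
      Real.sin ((k : ℝ) * Real.pi * (S : ℝ) / P)) :
    (Real.pi / 8) * ∑' k : ℕ, ((k : ℝ) + 1) * a (k + 1) ^ 2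
      = 7 * N ^ 2 * (P : ℝ) ^ 2 * (∑' n : ℕ, 1 / ((n : ℝ) + 1) ^ 3) / (16 * Real.pi ^ 3) := by
  subst hP
  have hπ : Real.pi ≠ 0 := Real.pi_ne_zero
  have hS0 : (S : ℝ) ≠ 0 := Nat.cast_ne_zero.2 (by omega)
  set C : ℝ := 4 * N * (S : ℝ) / Real.pi ^ 2 with hC
  -- rewrite each term
  have key : ∀ k : ℕ, ((k : ℝ) + 1) * a (k + 1) ^ 2
      = C ^ 2 * Real.sin (((k : ℝ) + 1) * Real.pi / 2) ^ 2 / ((k : ℝ) + 1) ^ 3 := by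
    intro k
    have hk : ((k : ℝ) + 1) ≠ 0 := by positivity
    have harg : ((k + 1 : ℕ) : ℝ) * Real.pi * (S : ℝ) / ((2 * S : ℕ) : ℝ)
        = ((k : ℝ) + 1) * Real.pi / 2 := by
      push_cast
      field_simp
    have ha1 : a (k + 1) = C * Real.sin (((k : ℝ) + 1) * Real.pi / 2) / ((k : ℝ) + 1) ^ 2 := by
      rw [ha, harg, hC]
      push_cast
      rw [show 2 * (S : ℝ) - (S : ℝ) = (S : ℝ) from by ring]
      field_simp
      ring
    rw [ha1, hC]
    field_simp
  -- summability of the zeta-3 series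
  have hζ : Summable (fun n : ℕ => 1 / ((n : ℝ) + 1) ^ 3) := by
    have h1 : Summable (fun n : ℕ => 1 / (n : ℝ) ^ 3) :=
      Real.summable_one_div_nat_pow.2 (by norm_num)
    have h2 := (summable_nat_add_iff 1).2 h1
    exact h2.congr fun n => by push_cast; ring
  have hodd : Summable (fun k : ℕ => 1 / (2 * (k : ℝ) + 1) ^ 3) := by
    have hinj : Function.Injective (fun n : ℕ => 2 * n) := fun a b h => by
      simp only at h; omega
    have := hζ.comp_injective hinj
    exact this.congr fun n => by
      simp only [Function.comp_apply]; push_cast; ring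
  have heq : ∀ k : ℕ, 1 / (2 * (k : ℝ) + 2) ^ 3 = (1 / 8) * (1 / ((k : ℝ) + 1) ^ 3) := by
    intro k
    have h8 : (2 * (k : ℝ) + 2) ^ 3 = 8 * ((k : ℝ) + 1) ^ 3 := by ring
    rw [h8]
    have hk : ((k : ℝ) + 1) ^ 3 ≠ 0 := by positivity
    field_simp
  have heven : Summable (fun k : ℕ => 1 / (2 * (k : ℝ) + 2) ^ 3) :=
    ((hζ.mul_left (1 / 8)).congr fun k => (heq k).symm)
  set Z : ℝ := ∑' n : ℕ, 1 / ((n : ℝ) + 1) ^ 3 with hZ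
  -- split zeta-3 into odd and even parts
  have hsplit : (∑' k : ℕ, 1 / (2 * (k : ℝ) + 1) ^ 3)
      + (∑' k : ℕ, 1 / (2 * (k : ℝ) + 2) ^ 3) = Z := by
    have h := tsum_even_add_odd (f := fun n : ℕ => 1 / ((n : ℝ) + 1) ^ 3)
      (hodd.congr fun k => by push_cast; ring)
      (heven.congr fun k => by push_cast; ring)
    rw [hZ, ← h]
    congr 1
    · exact tsum_congr fun k => by push_cast; ring
    · exact tsum_congr fun k => by push_cast; ring
  have hE : (∑' k : ℕ, 1 / (2 * (k : ℝ) + 2) ^ 3) = (1 / 8) * Z := by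
    rw [tsum_congr heq, tsum_mul_left]
  have hO : (∑' k : ℕ, 1 / (2 * (k : ℝ) + 1) ^ 3) = (7 / 8) * Z := by
    rw [hE] at hsplit; linarith
  -- evaluate sines
  have hsin_odd : ∀ k : ℕ, Real.sin ((2 * (k : ℝ) + 1 + 1) * Real.pi / 2) ^ 2 = 0 := by
    intro k
    have harg : (2 * (k : ℝ) + 1 + 1) * Real.pi / 2 = ((k + 1 : ℕ) : ℝ) * Real.pi := by
      push_cast; ring
    rw [harg, Real.sin_nat_mul_pi]
    norm_num
  have hsin_even : ∀ k : ℕ, Real.sin ((2 * (k : ℝ) + 1) * Real.pi / 2) ^ 2 = 1 := by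
    intro k
    have harg : (2 * (k : ℝ) + 1) * Real.pi / 2
        = ((k : ℕ) : ℝ) * Real.pi + Real.pi / 2 := by ring
    rw [harg, Real.sin_add, Real.sin_nat_mul_pi, Real.cos_pi_div_two, Real.sin_pi_div_two]
    have := Real.sin_sq_add_cos_sq (((k : ℕ) : ℝ) * Real.pi)
    rw [Real.sin_nat_mul_pi] at this
    nlinarith
  -- the main sum
  have hmain : (∑' k : ℕ, ((k : ℝ) + 1) * a (k + 1) ^ 2) = C ^ 2 * ((7 / 8) * Z) := by
    rw [tsum_congr key]
    set f : ℕ → ℝ := fun k => C ^ 2 * Real.sin (((k : ℝ) + 1) * Real.pi / 2) ^ 2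
      / ((k : ℝ) + 1) ^ 3 with hf
    have hfe : ∀ k : ℕ, f (2 * k) = C ^ 2 * (1 / (2 * (k : ℝ) + 1) ^ 3) := by
      intro k
      simp only [hf]
      push_cast
      rw [hsin_even k]
      ring
    have hfo : ∀ k : ℕ, f (2 * k + 1) = 0 := by
      intro k
      simp only [hf]
      push_cast
      rw [hsin_odd k]
      ring
    have hse : Summable (fun k : ℕ => f (2 * k)) :=
      ((hodd.mul_left (C ^ 2)).congr fun k => (hfe k).symm)
    have hso : Summable (fun k : ℕ => f (2 * k + 1)) := by
      simp only [hfo]; exact summable_zero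
    have h := tsum_even_add_odd (f := f) hse hso
    rw [← h, tsum_congr hfe, tsum_congr hfo, tsum_mul_left, tsum_zero, hO]
    ring
  rw [hmain, hC]
  push_cast
  field_simp
  ring
end

section
/- The function G(x) = Σ_{k=1}^∞ (1 − cos(kx))/k³, defined for x > 0, satisfies lim_{x → 0⁺} G(x)/(x² log(1/x)) = 1/2. -/
open Filter Finset

noncomputable def Gterm (x : ℝ) (k : ℕ) : ℝ :=
  (1 - Real.cos (((k : ℝ) + 1) * x)) / ((k : ℝ) + 1) ^ 3

lemma Gterm_nonneg (x : ℝ) (k : ℕ) : 0 ≤ Gterm x k := by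
  apply div_nonneg
  · linarith [Real.cos_le_one (((k : ℝ) + 1) * x)]
  · positivity

lemma Gterm_le (x : ℝ) (k : ℕ) : Gterm x k ≤ 2 * (1 / ((k : ℝ) + 1) ^ 3) := by
  unfold Gterm
  rw [mul_one_div, div_le_div_iff₀ (by positivity) (by positivity)]
  have := Real.neg_one_le_cos (((k : ℝ) + 1) * x)
  nlinarith [pow_pos (show (0:ℝ) < (k:ℝ)+1 by positivity) 3]

lemma Gterm_summable (x : ℝ) : Summable (Gterm x) := by
  have hg : Summable (fun k : ℕ => 2 * (1 / ((k : ℝ) + 1) ^ 3)) := by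
    apply Summable.mul_left
    have h := (summable_nat_add_iff (f := fun n : ℕ => 1 / (n : ℝ) ^ 3) 1).2
      (Real.summable_one_div_nat_pow.2 (by norm_num))
    simpa using h
  exact Summable.of_nonneg_of_le (Gterm_nonneg x) (Gterm_le x) hg

lemma telesc (m : ℝ) (hm : 1 ≤ m) : 2 / (m + 1) ^ 3 ≤ 1 / m ^ 2 - 1 / (m + 1) ^ 2 := by
  rw [div_sub_div _ _ (by positivity) (by positivity),
    div_le_div_iff₀ (by positivity) (by positivity)]
  nlinarith [sq_nonneg m, sq_nonneg (m+1)]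

set_option maxHeartbeats 1000000 in
lemma tail_bound (x : ℝ) (K : ℕ) (hK : 1 ≤ K) :
    (∑' j : ℕ, Gterm x (j + K)) ≤ 1 / (K : ℝ) ^ 2 := by
  have hKpos : (1:ℝ) ≤ K := by exact_mod_cast hK
  set a : ℕ → ℝ := fun j => 1 / ((j : ℝ) + K) ^ 2 with ha
  have hle : ∀ j : ℕ, Gterm x (j + K) ≤ a j - a (j + 1) := by
    intro j
    have hm1 : (1:ℝ) ≤ (j : ℝ) + K := by
      have : (0:ℝ) ≤ (j : ℝ) := Nat.cast_nonneg j
      linarith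
    have hb1 : Gterm x (j + K) ≤ 2 / ((j : ℝ) + K + 1) ^ 3 := by
      unfold Gterm
      push_cast
      gcongr
      linarith [Real.neg_one_le_cos (((j : ℝ) + K + 1) * x)]
    refine hb1.trans ?_
    have := telesc ((j : ℝ) + K) hm1
    simp only [ha, Nat.cast_add, Nat.cast_one]
    show (_ : ℝ) ≤ _
    convert this using 3 <;> ring
  have hanti : ∀ j : ℕ, 0 ≤ a j - a (j + 1) := fun j => le_trans (Gterm_nonneg x _) (hle j)
  have hsum : HasSum (fun j => a j - a (j + 1)) (a 0) := by
    rw [hasSum_iff_tendsto_nat_of_nonneg hanti]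
    have h1 : ∀ n, ∑ i ∈ range n, (a i - a (i + 1)) = a 0 - a n :=
      fun n => Finset.sum_range_sub' a n
    simp_rw [h1]
    have htend : Tendsto a atTop (nhds 0) := by
      have h2 : Tendsto (fun j : ℕ => ((j : ℝ) + K)⁻¹) atTop (nhds 0) :=
        (tendsto_atTop_add_const_right _ _ tendsto_natCast_atTop_atTop).inv_tendsto_atTop
      have h3 := h2.pow 2
      simpa [ha, one_div, ← inv_pow] using h3
    simpa using tendsto_const_nhds.sub htend
  calc (∑' j : ℕ, Gterm x (j + K))
      ≤ ∑' j, (a j - a (j + 1)) :=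
        Summable.tsum_le_tsum hle ((summable_nat_add_iff K).2 (Gterm_summable x)) hsum.summable
    _ = a 0 := hsum.tsum_eq
    _ = 1 / (K : ℝ) ^ 2 := by simp [ha]

lemma harmonic_real (K : ℕ) : ((harmonic K : ℚ) : ℝ) = ∑ k ∈ range K, 1 / ((k : ℝ) + 1) := by
  unfold harmonic
  push_cast
  simp [one_div]

lemma head_term_lower (x : ℝ) (hx : 0 < x) (k : ℕ) (ht : ((k : ℝ) + 1) * x ≤ 1) :
    x ^ 2 / (2 * ((k : ℝ) + 1)) - 5 / 96 * x ^ 4 * ((k : ℝ) + 1) ≤ Gterm x k := by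
  set n : ℝ := (k : ℝ) + 1 with hn
  have hn0 : (0 : ℝ) < n := by positivity
  have ht0 : 0 ≤ n * x := by positivity
  have hb := Real.cos_bound (x := n * x) (by rw [abs_of_nonneg ht0]; exact ht)
  rw [abs_le, abs_of_nonneg ht0] at hb
  have hcos : 1 - Real.cos (n * x) ≥ (n * x) ^ 2 / 2 - (n * x) ^ 4 * (5 / 96) := by
    linarith [hb.2]
  unfold Gterm
  rw [← hn, ge_iff_le, ← sub_nonneg] at *
  have key : (1 - Real.cos (n * x)) / n ^ 3 - (x ^ 2 / (2 * n) - 5 / 96 * x ^ 4 * n)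
      = ((1 - Real.cos (n * x)) - ((n * x) ^ 2 / 2 - (n * x) ^ 4 * (5 / 96))) / n ^ 3 := by
    field_simp
  rw [key]
  positivity

lemma head_term_upper (x : ℝ) (k : ℕ) :
    Gterm x k ≤ x ^ 2 / (2 * ((k : ℝ) + 1)) := by
  set n : ℝ := (k : ℝ) + 1 with hn
  have hn0 : (0 : ℝ) < n := by positivity
  have hcos := Real.one_sub_sq_div_two_le_cos (x := n * x)
  unfold Gterm
  rw [← hn, div_le_iff₀ (by positivity)]
  have : x ^ 2 / (2 * n) * n ^ 3 = (n * x) ^ 2 / 2 := by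
    field_simp
  rw [this]
  linarith

lemma head_upper (x : ℝ) (hx : 0 ≤ x) (K : ℕ) :
    ∑ k ∈ range K, Gterm x k ≤ x ^ 2 / 2 * (1 + Real.log K) := by
  calc ∑ k ∈ range K, Gterm x k
      ≤ ∑ k ∈ range K, x ^ 2 / (2 * ((k : ℝ) + 1)) :=
        Finset.sum_le_sum fun k _ => head_term_upper x k
    _ = x ^ 2 / 2 * ∑ k ∈ range K, 1 / ((k : ℝ) + 1) := by
        rw [Finset.mul_sum]
        exact Finset.sum_congr rfl fun k _ => by field_simp
    _ ≤ x ^ 2 / 2 * (1 + Real.log K) := by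
        apply mul_le_mul_of_nonneg_left ?_ (by positivity)
        rw [← harmonic_real]
        exact harmonic_le_one_add_log K

lemma head_lower (x : ℝ) (hx : 0 < x) (K : ℕ) (hKx : (K : ℝ) * x ≤ 1) :
    x ^ 2 / 2 * Real.log ((K : ℝ) + 1) - 5 / 96 * x ^ 2 ≤ ∑ k ∈ range K, Gterm x k := by
  have hterm : ∀ k ∈ range K,
      x ^ 2 / (2 * ((k : ℝ) + 1)) - 5 / 96 * x ^ 4 * ((k : ℝ) + 1) ≤ Gterm x k := by
    intro k hk
    apply head_term_lower x hx
    have hk1 : (k : ℝ) + 1 ≤ K := by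
      have := Finset.mem_range.1 hk
      exact_mod_cast Nat.succ_le_of_lt this
    calc ((k : ℝ) + 1) * x ≤ (K : ℝ) * x := by
          exact mul_le_mul_of_nonneg_right hk1 hx.le
      _ ≤ 1 := hKx
  have hsum := Finset.sum_le_sum hterm
  rw [Finset.sum_sub_distrib] at hsum
  have h1 : x ^ 2 / 2 * Real.log ((K : ℝ) + 1) ≤ ∑ k ∈ range K, x ^ 2 / (2 * ((k : ℝ) + 1)) := by
    have : ∑ k ∈ range K, x ^ 2 / (2 * ((k : ℝ) + 1))
        = x ^ 2 / 2 * ∑ k ∈ range K, 1 / ((k : ℝ) + 1) := by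
      rw [Finset.mul_sum]
      exact Finset.sum_congr rfl fun k _ => by field_simp
    rw [this]
    apply mul_le_mul_of_nonneg_left ?_ (by positivity)
    rw [← harmonic_real]
    have := log_add_one_le_harmonic K
    rwa [Nat.cast_add, Nat.cast_one] at this
  have h2 : ∑ k ∈ range K, 5 / 96 * x ^ 4 * ((k : ℝ) + 1) ≤ 5 / 96 * x ^ 2 := by
    have hb : ∀ k ∈ range K, 5 / 96 * x ^ 4 * ((k : ℝ) + 1) ≤ 5 / 96 * x ^ 4 * K := by
      intro k hk
      have hk1 : (k : ℝ) + 1 ≤ K := by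
        have := Finset.mem_range.1 hk
        exact_mod_cast Nat.succ_le_of_lt this
      apply mul_le_mul_of_nonneg_left hk1 (by positivity)
    calc ∑ k ∈ range K, 5 / 96 * x ^ 4 * ((k : ℝ) + 1)
        ≤ ∑ _k ∈ range K, 5 / 96 * x ^ 4 * K := Finset.sum_le_sum hb
      _ = 5 / 96 * x ^ 4 * K * K := by
          simp [Finset.sum_const, Finset.card_range, nsmul_eq_mul]; ring
      _ ≤ 5 / 96 * x ^ 2 := by
          have h3 : ((K : ℝ) * x) ^ 2 ≤ 1 := by
            nlinarith [mul_nonneg (Nat.cast_nonneg (α := ℝ) K) hx.le]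
          nlinarith [sq_nonneg x, sq_nonneg ((K:ℝ)*x)]
  linarith

lemma main_bounds (x : ℝ) (hx : 0 < x) (hx2 : x < 1/2) :
    1/2 - (5/96)/Real.log (1/x) ≤ (∑' k : ℕ, Gterm x k) / (x^2 * Real.log (1/x)) ∧
    (∑' k : ℕ, Gterm x k) / (x^2 * Real.log (1/x)) ≤ 1/2 + (9/2)/Real.log (1/x) := by
  set K : ℕ := ⌊1/x⌋₊ with hKdef
  set L : ℝ := Real.log (1/x) with hLdef
  have hinv2 : (2:ℝ) ≤ 1/x := by
    rw [le_div_iff₀ hx]; linarith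
  have hL : 0 < L := Real.log_pos (by linarith)
  have hK1 : 1 ≤ K := Nat.le_floor (by exact_mod_cast (by linarith : (1:ℝ) ≤ 1/x))
  have hK1R : (1:ℝ) ≤ (K:ℝ) := by exact_mod_cast hK1
  have hKle : (K:ℝ) ≤ 1/x := Nat.floor_le (by positivity)
  have hKx : (K:ℝ) * x ≤ 1 := by
    calc (K:ℝ) * x ≤ (1/x) * x := mul_le_mul_of_nonneg_right hKle hx.le
      _ = 1 := by field_simp
  have hK1x : 1/x < (K:ℝ) + 1 := Nat.lt_floor_add_one _
  have hKge : 1/(2*x) ≤ (K:ℝ) := by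
    have h1 : 1/(2*x) = (1/x)/2 := by ring
    linarith
  have hG := (Summable.sum_add_tsum_nat_add K (Gterm_summable x)).symm
  have htail0 : 0 ≤ ∑' j : ℕ, Gterm x (j + K) := tsum_nonneg fun j => Gterm_nonneg x _
  have htail := tail_bound x K hK1
  have hhu := head_upper x hx.le K
  have hhl := head_lower x hx K hKx
  have hlogK : Real.log K ≤ L := Real.log_le_log (by positivity) hKle
  have hlogK1 : L ≤ Real.log ((K:ℝ) + 1) := Real.log_le_log (by positivity) hK1x.le
  have hKsq : 1/(K:ℝ)^2 ≤ 4 * x^2 := by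
    rw [div_le_iff₀ (by positivity)]
    have h2xK : 1 ≤ (K:ℝ) * (2*x) := (div_le_iff₀ (by positivity)).1 hKge
    nlinarith [h2xK]
  have hD : 0 < x^2 * L := by positivity
  have hGu : (∑' k : ℕ, Gterm x k) ≤ x^2/2 * L + (9/2) * x^2 := by
    rw [hG]
    have : x^2/2 * (1 + Real.log K) ≤ x^2/2 * (1 + L) :=
      mul_le_mul_of_nonneg_left (by linarith) (by positivity)
    nlinarith
  have hGl : x^2/2 * L - 5/96 * x^2 ≤ ∑' k : ℕ, Gterm x k := by
    rw [hG]
    have : x^2/2 * L ≤ x^2/2 * Real.log ((K:ℝ) + 1) :=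
      mul_le_mul_of_nonneg_left hlogK1 (by positivity)
    linarith
  constructor
  · rw [le_div_iff₀ hD]
    have he : (1/2 - (5/96)/L) * (x^2 * L) = x^2/2 * L - 5/96 * x^2 := by
      field_simp
    rw [he]; exact hGl
  · rw [div_le_iff₀ hD]
    have he : (1/2 + (9/2)/L) * (x^2 * L) = x^2/2 * L + (9/2) * x^2 := by
      field_simp
    rw [he]; exact hGu

/-- The function `G(x) = Σ_{k≥1} (1 − cos(kx))/k³` satisfies
`G(x)/(x² log(1/x)) → 1/2` as `x → 0⁺`. -/
theorem stmt12 :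
    Tendsto (fun x : ℝ =>
        (∑' k : ℕ, (1 - Real.cos (((k : ℝ) + 1) * x)) / ((k : ℝ) + 1) ^ 3) /
          (x ^ 2 * Real.log (1 / x)))
      (nhdsWithin 0 (Set.Ioi 0)) (nhds (1 / 2)) := by
  have hLtend : Tendsto (fun x : ℝ => Real.log (1/x)) (nhdsWithin 0 (Set.Ioi 0)) atTop := by
    have h := Real.tendsto_log_atTop.comp tendsto_inv_nhdsGT_zero
    exact h.congr fun x => by simp [Function.comp, one_div]
  have hlow : Tendsto (fun x : ℝ => 1/2 - (5/96)/Real.log (1/x))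
      (nhdsWithin 0 (Set.Ioi 0)) (nhds (1/2)) := by
    have h := (tendsto_const_nhds (x := (5/96:ℝ))
      (f := nhdsWithin (0:ℝ) (Set.Ioi 0))).div_atTop hLtend
    simpa using tendsto_const_nhds.sub h
  have hup : Tendsto (fun x : ℝ => 1/2 + (9/2)/Real.log (1/x))
      (nhdsWithin 0 (Set.Ioi 0)) (nhds (1/2)) := by
    have h := (tendsto_const_nhds (x := (9/2:ℝ))
      (f := nhdsWithin (0:ℝ) (Set.Ioi 0))).div_atTop hLtend
    simpa using tendsto_const_nhds.add h
  apply tendsto_of_tendsto_of_tendsto_of_le_of_le' hlow hup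
  · exact Filter.eventually_of_mem (Ioo_mem_nhdsGT (by norm_num : (0:ℝ) < 1/2))
      fun x hx => (main_bounds x hx.1 hx.2).1
  · exact Filter.eventually_of_mem (Ioo_mem_nhdsGT (by norm_num : (0:ℝ) < 1/2))
      fun x hx => (main_bounds x hx.1 hx.2).2
end

section
/- Fix a real number N > 0 and integers S, P with 1 ≤ S < P. Let R_m : [0, NP/(P−S)] → ℝ be the magnetic (mirror) rank function, defined by R_m(η) = (P − S)η for 0 ≤ η ≤ SN/(P − S) and R_m(η) = S(NP/(P − S) − η) for SN/(P − S) ≤ η ≤ NP/(P − S). Then for every integer k ≥ 1, the magnetic Fourier sine coefficient a_k^{(m)} = ((P − S)/(NP)) ∫₀^{NP/(P−S)} R_m(η) sin(kπ(P − S)η/(NP)) dη equals (N P²/((P − S) π² k²)) sin(kπS/P); in particular it coincides with the Fourier sine coefficient a_k^{(e)} = (N P²/((P − S) π² k²)) sin(kπS/P) of the electric triangular rank function. -/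
open MeasureTheory

lemma deriv1 (c : ℝ) (hc : c ≠ 0) (x : ℝ) :
    HasDerivAt (fun x => Real.sin (c*x)/c^2 - x*Real.cos (c*x)/c)
      (x * Real.sin (c*x)) x := by
  have hcx : HasDerivAt (fun x : ℝ => c * x) c x := by
    simpa using (hasDerivAt_id x).const_mul c
  have hsin : HasDerivAt (fun x => Real.sin (c*x)) (Real.cos (c*x) * c) x :=
    (Real.hasDerivAt_sin (c*x)).comp x hcx
  have hcos : HasDerivAt (fun x => Real.cos (c*x)) (-Real.sin (c*x) * c) x :=
    (Real.hasDerivAt_cos (c*x)).comp x hcx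
  have h2 : HasDerivAt (fun x => x * Real.cos (c*x))
      (1 * Real.cos (c*x) + x * (-Real.sin (c*x) * c)) x :=
    (hasDerivAt_id x).mul hcos
  have := (hsin.div_const (c^2)).sub (h2.div_const c)
  refine this.congr_deriv ?_
  field_simp
  ring

lemma deriv2 (c L : ℝ) (hc : c ≠ 0) (x : ℝ) :
    HasDerivAt (fun x => (x - L) * Real.cos (c*x)/c - Real.sin (c*x)/c^2)
      ((L - x) * Real.sin (c*x)) x := by
  have hcx : HasDerivAt (fun x : ℝ => c * x) c x := by
    simpa using (hasDerivAt_id x).const_mul c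
  have hsin : HasDerivAt (fun x => Real.sin (c*x)) (Real.cos (c*x) * c) x :=
    (Real.hasDerivAt_sin (c*x)).comp x hcx
  have hcos : HasDerivAt (fun x => Real.cos (c*x)) (-Real.sin (c*x) * c) x :=
    (Real.hasDerivAt_cos (c*x)).comp x hcx
  have hid : HasDerivAt (fun x : ℝ => x - L) 1 x := (hasDerivAt_id x).sub_const L
  have h2 : HasDerivAt (fun x => (x - L) * Real.cos (c*x))
      (1 * Real.cos (c*x) + (x - L) * (-Real.sin (c*x) * c)) x :=
    hid.mul hcos
  have := (h2.div_const c).sub (hsin.div_const (c^2))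
  refine this.congr_deriv ?_
  field_simp
  ring

/-- The Fourier sine coefficients of the magnetic (mirror) rank function equal
`(NP²/((P−S)π²k²)) sin(kπS/P)` and hence coincide with the electric coefficients. -/
theorem stmt18 (N : ℝ) (hN : 0 < N) (S P : ℕ) (hS : 1 ≤ S) (hSP : S < P)
    (Rm : ℝ → ℝ)
    (hRm1 : ∀ η ∈ Set.Icc (0 : ℝ) ((S : ℝ) * N / ((P : ℝ) - (S : ℝ))),
      Rm η = ((P : ℝ) - (S : ℝ)) * η)
    (hRm2 : ∀ η ∈ Set.Icc ((S : ℝ) * N / ((P : ℝ) - (S : ℝ))) (N * (P : ℝ) / ((P : ℝ) - (S : ℝ))),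
      Rm η = (S : ℝ) * (N * (P : ℝ) / ((P : ℝ) - (S : ℝ)) - η))
    (am ae : ℕ → ℝ)
    (ham : ∀ k : ℕ, am k = (((P : ℝ) - (S : ℝ)) / (N * (P : ℝ))) *
      ∫ η in (0 : ℝ)..(N * (P : ℝ) / ((P : ℝ) - (S : ℝ))),
        Rm η * Real.sin ((k : ℝ) * Real.pi * ((P : ℝ) - (S : ℝ)) * η / (N * (P : ℝ))))
    (hae : ∀ k : ℕ, ae k = N * (P : ℝ) ^ 2 / (((P : ℝ) - (S : ℝ)) * Real.pi ^ 2 * (k : ℝ) ^ 2) *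
      Real.sin ((k : ℝ) * Real.pi * (S : ℝ) / P)) :
    ∀ k : ℕ, 1 ≤ k →
      am k = N * (P : ℝ) ^ 2 / (((P : ℝ) - (S : ℝ)) * Real.pi ^ 2 * (k : ℝ) ^ 2) *
          Real.sin ((k : ℝ) * Real.pi * (S : ℝ) / P) ∧
      am k = ae k := by
  intro k hk
  have hSP' : (S : ℝ) < (P : ℝ) := by exact_mod_cast hSP
  have hb : (0:ℝ) < (P:ℝ) - (S:ℝ) := by linarith
  have hP : (0:ℝ) < (P:ℝ) := by
    have : (1:ℝ) ≤ (S:ℝ) := by exact_mod_cast hS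
    linarith
  have hS0 : (0:ℝ) < (S:ℝ) := by
    have : (1:ℝ) ≤ (S:ℝ) := by exact_mod_cast hS
    linarith
  have hk0 : (0:ℝ) < (k:ℝ) := by exact_mod_cast hk
  set b : ℝ := (P:ℝ) - (S:ℝ) with hbdef
  set s : ℝ := (S:ℝ) * N / b with hsdef
  set L : ℝ := N * (P:ℝ) / b with hLdef
  set c : ℝ := (k:ℝ) * Real.pi * b / (N * (P:ℝ)) with hcdef
  have hc : c ≠ 0 := by
    rw [hcdef]
    positivity
  have hs0 : (0:ℝ) ≤ s := by positivity
  have hsL : s ≤ L := by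
    rw [hsdef, hLdef]
    rw [div_le_div_iff₀ hb hb]
    nlinarith [mul_pos hN (mul_pos hb hb)]
  have hN' : N ≠ 0 := hN.ne'
  have hP' : (P:ℝ) ≠ 0 := hP.ne'
  have hb' : b ≠ 0 := hb.ne'
  have hk' : (k:ℝ) ≠ 0 := hk0.ne'
  have hπ : Real.pi ≠ 0 := Real.pi_ne_zero
  -- rewrite the sine argument as c * η
  have hint : (∫ η in (0:ℝ)..L, Rm η * Real.sin ((k:ℝ) * Real.pi * b * η / (N * (P:ℝ))))
      = ∫ η in (0:ℝ)..L, Rm η * Real.sin (c * η) := by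
    apply intervalIntegral.integral_congr
    intro η _
    have : (k:ℝ) * Real.pi * b * η / (N * (P:ℝ)) = c * η := by rw [hcdef]; ring
    simp only [this]
  have heq1 : Set.EqOn (fun η => Rm η * Real.sin (c * η))
      (fun η => b * (η * Real.sin (c * η))) (Set.uIcc 0 s) := by
    intro η hη
    rw [Set.uIcc_of_le hs0] at hη
    simp only
    rw [hRm1 η hη, mul_assoc]
  have heq2 : Set.EqOn (fun η => Rm η * Real.sin (c * η))
      (fun η => (S:ℝ) * ((L - η) * Real.sin (c * η))) (Set.uIcc s L) := by
    intro η hη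
    rw [Set.uIcc_of_le hsL] at hη
    simp only
    rw [hRm2 η hη, mul_assoc]
  have hcont1 : Continuous fun η : ℝ => b * (η * Real.sin (c * η)) := by fun_prop
  have hcont2 : Continuous fun η : ℝ => (S:ℝ) * ((L - η) * Real.sin (c * η)) := by fun_prop
  have hii1 : IntervalIntegrable (fun η => Rm η * Real.sin (c * η)) volume 0 s := by
    refine (hcont1.intervalIntegrable 0 s).congr ?_
    intro x hx
    exact (heq1 (Set.uIoc_subset_uIcc hx)).symm
  have hii2 : IntervalIntegrable (fun η => Rm η * Real.sin (c * η)) volume s L := by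
    refine (hcont2.intervalIntegrable s L).congr ?_
    intro x hx
    exact (heq2 (Set.uIoc_subset_uIcc hx)).symm
  have hsplit : (∫ η in (0:ℝ)..L, Rm η * Real.sin (c * η))
      = (∫ η in (0:ℝ)..s, Rm η * Real.sin (c * η))
        + ∫ η in s..L, Rm η * Real.sin (c * η) :=
    (intervalIntegral.integral_add_adjacent_intervals hii1 hii2).symm
  have hI1 : (∫ η in (0:ℝ)..s, Rm η * Real.sin (c * η))
      = b * (Real.sin (c * s) / c ^ 2 - s * Real.cos (c * s) / c) := by
    rw [intervalIntegral.integral_congr heq1, intervalIntegral.integral_const_mul]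
    rw [intervalIntegral.integral_eq_sub_of_hasDerivAt (fun x _ => deriv1 c hc x)
      ((by fun_prop : Continuous fun x : ℝ => x * Real.sin (c * x)).intervalIntegrable 0 s)]
    simp
  have hI2 : (∫ η in s..L, Rm η * Real.sin (c * η))
      = (S:ℝ) * (((L - L) * Real.cos (c * L) / c - Real.sin (c * L) / c ^ 2)
          - ((s - L) * Real.cos (c * s) / c - Real.sin (c * s) / c ^ 2)) := by
    rw [intervalIntegral.integral_congr heq2, intervalIntegral.integral_const_mul]
    rw [intervalIntegral.integral_eq_sub_of_hasDerivAt (fun x _ => deriv2 c L hc x)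
      ((by fun_prop : Continuous fun x : ℝ => (L - x) * Real.sin (c * x)).intervalIntegrable s L)]
  have hcL : c * L = (k:ℝ) * Real.pi := by
    rw [hcdef, hLdef]
    field_simp
  have hsinL : Real.sin (c * L) = 0 := by
    rw [hcL]
    exact Real.sin_nat_mul_pi k
  have hcs : c * s = (k:ℝ) * Real.pi * (S:ℝ) / (P:ℝ) := by
    rw [hcdef, hsdef]
    field_simp
  have hcsq : c ^ 2 = (k:ℝ) ^ 2 * Real.pi ^ 2 * b ^ 2 / (N ^ 2 * (P:ℝ) ^ 2) := by
    rw [hcdef]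
    field_simp
  have hsval : s = (S:ℝ) * N / b := hsdef
  have hLval : L = N * (P:ℝ) / b := hLdef
  have key : am k = N * (P : ℝ) ^ 2 / (b * Real.pi ^ 2 * (k : ℝ) ^ 2) *
      Real.sin ((k : ℝ) * Real.pi * (S : ℝ) / P) := by
    rw [ham k, hint, hsplit, hI1, hI2, hsinL, hcs, hcsq, hsval, hLval]
    have hc2 : c ≠ 0 := hc
    field_simp
    ring
  exact ⟨key, by rw [key, hae k]⟩
end
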